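/- Let c, d be real numbers with 0 < c ≤ d. Then the function y(x) = (x/(x+1))^{c·x + d} is strictly increasing on (0, ∞), and y(x) tends to e^{−c} as x → ∞. -/

import Mathlib

/-- For `0 < c ≤ d`, the function `y(x) = (x/(x+1))^(c x + d)` is strictly increasing on
`(0, ∞)` and tends to `e^{-c}` as `x → ∞`. -/
theorem pow_ratio_strictMono_and_tendsto (c d : ℝ) (hc : 0 < c) (hcd : c ≤ d) :
    StrictMonoOn (fun x : ℝ => (x / (x + 1)) ^ (c * x + d)) (Set.Ioi (0 : ℝ)) ∧
    Filter.Tendsto (fun x : ℝ => (x / (x + 1)) ^ (c * x + d)) Filter.atTop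
      (nhds (Real.exp (-c))) := by
  set g : ℝ → ℝ := fun x => (c * x + d) * (Real.log x - Real.log (x + 1)) with hgdef
  have hfg : ∀ x ∈ Set.Ioi (0 : ℝ), (x / (x + 1)) ^ (c * x + d) = Real.exp (g x) := by
    intro x hx
    have hx0 : (0 : ℝ) < x := hx
    have hx1 : (0 : ℝ) < x + 1 := by linarith
    rw [Real.rpow_def_of_pos (by positivity), Real.log_div hx0.ne' hx1.ne', hgdef]
    ring_nf
  -- derivative of g
  have hderiv : ∀ x ∈ Set.Ioi (0 : ℝ),
      HasDerivAt g (c * (Real.log x - Real.log (x + 1)) + (c * x + d) * (x⁻¹ - (x + 1)⁻¹)) x := by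
    intro x hx
    have hx0 : (0 : ℝ) < x := hx
    have hx1 : (0 : ℝ) < x + 1 := by linarith
    have h1 : HasDerivAt (fun x : ℝ => c * x + d) c x := by
      simpa using ((hasDerivAt_id x).const_mul c).add_const d
    have h2 : HasDerivAt (fun x : ℝ => Real.log x - Real.log (x + 1)) (x⁻¹ - (x + 1)⁻¹) x := by
      exact (Real.hasDerivAt_log hx0.ne').sub
        (by simpa using (((hasDerivAt_id x).add_const 1).log hx1.ne'))
    exact h1.mul h2
  have hderivpos : ∀ x ∈ Set.Ioi (0 : ℝ),
      0 < c * (Real.log x - Real.log (x + 1)) + (c * x + d) * (x⁻¹ - (x + 1)⁻¹) := by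
    intro x hx
    have hx0 : (0 : ℝ) < x := hx
    have hx1 : (0 : ℝ) < x + 1 := by linarith
    have hlog : Real.log ((x + 1) / x) < (x + 1) / x - 1 := by
      apply Real.log_lt_sub_one_of_pos (by positivity)
      intro h
      rw [div_eq_one_iff_eq hx0.ne'] at h
      linarith
    rw [Real.log_div hx1.ne' hx0.ne'] at hlog
    have he : (x + 1) / x - 1 = x⁻¹ := by field_simp; ring
    rw [he] at hlog
    have hinv : x⁻¹ - (x + 1)⁻¹ = (x * (x + 1))⁻¹ := by
      rw [inv_sub_inv hx0.ne' hx1.ne']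
      rw [show x + 1 - x = 1 by ring, one_div]
    rw [hinv]
    have h1 : c * (Real.log x - Real.log (x + 1)) > -(c * x⁻¹) := by
      nlinarith [mul_lt_mul_of_pos_left hlog hc]
    have h2 : c * x⁻¹ ≤ (c * x + d) * (x * (x + 1))⁻¹ := by
      have key : c * (x + 1) * (x * (x + 1))⁻¹ ≤ (c * x + d) * (x * (x + 1))⁻¹ :=
        mul_le_mul_of_nonneg_right (by nlinarith) (by positivity)
      refine le_trans (le_of_eq ?_) key
      rw [mul_inv, show c * (x + 1) * (x⁻¹ * (x + 1)⁻¹) = c * x⁻¹ * ((x + 1) * (x + 1)⁻¹) from by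
        ring, mul_inv_cancel₀ hx1.ne', mul_one]
    linarith
  have hgmono : StrictMonoOn g (Set.Ioi (0 : ℝ)) := by
    apply strictMonoOn_of_deriv_pos (convex_Ioi 0)
    · intro x hx
      exact ((hderiv x hx).differentiableAt).continuousAt.continuousWithinAt
    · intro x hx
      rw [interior_Ioi] at hx
      rw [(hderiv x hx).deriv]
      exact hderivpos x hx
  constructor
  · intro a ha b hb hab
    simp only
    rw [hfg a ha, hfg b hb]
    exact Real.exp_lt_exp.mpr (hgmono ha hb hab)
  · -- limit part
    have hglim : Filter.Tendsto g Filter.atTop (nhds (-c)) := by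
      have h1 : Filter.Tendsto (fun x : ℝ => x * Real.log (1 + 1 / x)) Filter.atTop (nhds 1) :=
        Real.tendsto_mul_log_one_add_div_atTop 1
      have h2 : Filter.Tendsto (fun x : ℝ => c + d / x) Filter.atTop (nhds c) := by
        have hd : Filter.Tendsto (fun x : ℝ => d / x) Filter.atTop (nhds 0) :=
          Filter.Tendsto.div_atTop tendsto_const_nhds Filter.tendsto_id
        simpa using (tendsto_const_nhds : Filter.Tendsto (fun _ : ℝ => c) _ _).add hd
      have h3 : Filter.Tendsto (fun x : ℝ => -((c + d / x) * (x * Real.log (1 + 1 / x))))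
          Filter.atTop (nhds (-c)) := by
        simpa using (h2.mul h1).neg
      refine h3.congr' ?_
      filter_upwards [Filter.eventually_gt_atTop (0 : ℝ)] with x hx0
      have hx1 : (0 : ℝ) < x + 1 := by linarith
      have he : (1 : ℝ) + 1 / x = (x + 1) / x := by field_simp
      rw [he, Real.log_div hx1.ne' hx0.ne', hgdef]
      field_simp
      ring
    have : Filter.Tendsto (fun x => Real.exp (g x)) Filter.atTop (nhds (Real.exp (-c))) :=
      (Real.continuous_exp.tendsto _).comp hglim
    refine this.congr' ?_
    filter_upwards [Filter.eventually_gt_atTop (0 : ℝ)] with x hx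
    exact (hfg x hx).symm
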